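/- arXiv:1712.00357 — 2 statements merged into one kernel-verified Lean document; each statement's English description precedes it below -/
import Mathlib

section
/- Under hypothesis (H), for every x ∈ dom ∂f, the extended support esupp(x) = supp(x) ∪ {k : −(∇h(x))_k ∈ bd I_k} is a finite set. -/
open Filter Topology

open scoped RealInnerProductSpace ENNReal

private lemma slope_lim_aux {F : ℝ → ℝ} {d t : ℝ} (hF : HasDerivAt F d 0) (hF0 : F 0 = 0)
    (ht : t ≠ 0) : Tendsto (fun a : ℝ => F (a * t) / a) (𝓝[>] (0:ℝ)) (𝓝 (d * t)) := by
  have hslope : Tendsto (slope F 0) (𝓝[≠] (0:ℝ)) (𝓝 d) := hasDerivAt_iff_tendsto_slope.1 hF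
  have hmap : Tendsto (fun a : ℝ => a * t) (𝓝[>] (0:ℝ)) (𝓝[≠] (0:ℝ)) := by
    apply tendsto_nhdsWithin_of_tendsto_nhds_of_eventually_within
    · have : Tendsto (fun a : ℝ => a * t) (𝓝 (0:ℝ)) (𝓝 (0 * t)) :=
        (continuous_id.mul continuous_const).tendsto 0
      rw [zero_mul] at this
      exact this.mono_left nhdsWithin_le_nhds
    · filter_upwards [self_mem_nhdsWithin] with a (ha : (0:ℝ) < a)
      exact mul_ne_zero (ne_of_gt ha) ht
  have h1 : Tendsto (fun a : ℝ => slope F 0 (a * t)) (𝓝[>] (0:ℝ)) (𝓝 d) := hslope.comp hmap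
  have h2 : Tendsto (fun a : ℝ => slope F 0 (a * t) * t) (𝓝[>] (0:ℝ)) (𝓝 (d * t)) :=
    h1.mul_const t
  refine h2.congr' ?_
  filter_upwards [self_mem_nhdsWithin] with a (ha : (0:ℝ) < a)
  rw [slope_def_field, hF0]
  field_simp
  ring

private lemma psi_nonneg (ψ : ℝ → EReal)
    (hconv : ∀ s t a b : ℝ, 0 ≤ a → 0 ≤ b → a + b = 1 →
      ψ (a * s + b * t) ≤ (a : EReal) * ψ s + (b : EReal) * ψ t)
    (hbot : ∀ t, ψ t ≠ ⊥) (h0 : ψ 0 = 0)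
    (hdiff : ∃ (F : ℝ → ℝ) (ε : ℝ), 0 < ε ∧ (∀ t : ℝ, |t| < ε → ψ t = (F t : EReal)) ∧
      HasDerivAt F 0 0) (t : ℝ) : 0 ≤ ψ t := by
  by_contra hneg
  push_neg at hneg
  obtain ⟨F, ε, hε, hFψ, hF'⟩ := hdiff
  have ht : t ≠ 0 := by rintro rfl; rw [h0] at hneg; exact absurd hneg (lt_irrefl _)
  have htop : ψ t ≠ ⊤ := by rintro hh; rw [hh] at hneg; exact absurd hneg (by simp)
  set r := (ψ t).toReal with hr
  have hψt : ψ t = (r : EReal) := (EReal.coe_toReal htop (hbot t)).symm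
  have hrneg : r < 0 := by
    have h2 := hneg; rw [hψt] at h2; exact_mod_cast h2
  have hF0 : F 0 = 0 := by
    have h2 := hFψ 0 (by simpa using hε)
    rw [h0] at h2; exact_mod_cast h2.symm
  have hlim := slope_lim_aux hF' hF0 ht
  rw [zero_mul] at hlim
  have hev : ∀ᶠ a in 𝓝[>] (0:ℝ), F (a * t) / a ≤ r := by
    have hmem : Set.Ioo (0:ℝ) (min 1 (ε / |t|)) ∈ 𝓝[>] (0:ℝ) :=
      Ioo_mem_nhdsGT_of_mem ⟨le_refl 0, lt_min one_pos (div_pos hε (abs_pos.2 ht))⟩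
    filter_upwards [hmem] with a ha
    obtain ⟨ha0, ha1⟩ := ha
    have ha1' : a ≤ 1 := le_of_lt (lt_of_lt_of_le ha1 (min_le_left _ _))
    have haε : |a * t| < ε := by
      rw [abs_mul, abs_of_pos ha0]
      calc a * |t| < (ε / |t|) * |t| :=
            mul_lt_mul_of_pos_right (lt_of_lt_of_le ha1 (min_le_right _ _)) (abs_pos.2 ht)
        _ = ε := div_mul_cancel₀ _ (ne_of_gt (abs_pos.2 ht))
    have hcv := hconv t 0 a (1 - a) (le_of_lt ha0) (by linarith) (by ring)
    have harg : a * t + (1 - a) * 0 = a * t := by ring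
    rw [harg, h0, mul_zero, add_zero, hψt, hFψ _ haε] at hcv
    have hreal : F (a * t) ≤ a * r := by exact_mod_cast hcv
    rw [div_le_iff₀ ha0]
    linarith
  have hfin := le_of_tendsto hlim hev
  linarith

private lemma grad_ineq {E : Type*} [NormedAddCommGroup E] [InnerProductSpace ℝ E] [CompleteSpace E]
    {h : E → ℝ} (hconv : ConvexOn ℝ Set.univ h) {p y : E} (hgrad : HasGradientAt h p y)
    (x : E) : h y + ⟪p, x - y⟫ ≤ h x := by
  set φ : ℝ → ℝ := fun a => h (y + a • (x - y)) with hφ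
  have hline : HasDerivAt (fun a : ℝ => y + a • (x - y)) (x - y) 0 := by
    simpa using ((hasDerivAt_id (0:ℝ)).smul_const (x - y)).const_add y
  have hφd : HasDerivAt φ ⟪p, x - y⟫ 0 := by
    have h1 : HasFDerivAt h (InnerProductSpace.toDual ℝ E p) (y + (0:ℝ) • (x - y)) := by
      simpa using hgrad.hasFDerivAt
    have h2 := h1.comp_hasDerivAt 0 hline
    simpa [InnerProductSpace.toDual_apply_apply, hφ, Function.comp_def] using h2
  have hslope : Tendsto (slope φ 0) (𝓝[≠] (0:ℝ)) (𝓝 ⟪p, x - y⟫) :=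
    hasDerivAt_iff_tendsto_slope.1 hφd
  have hev : ∀ᶠ a in 𝓝[>] (0:ℝ), slope φ 0 a ≤ h x - h y := by
    have hmem : Set.Ioo (0:ℝ) 1 ∈ 𝓝[>] (0:ℝ) := Ioo_mem_nhdsGT_of_mem ⟨le_refl 0, one_pos⟩
    filter_upwards [hmem] with a ha
    obtain ⟨ha0, ha1⟩ := ha
    have hcv := hconv.2 (Set.mem_univ y) (Set.mem_univ x)
      (by linarith : (0:ℝ) ≤ 1 - a) (le_of_lt ha0) (by ring)
    have harg : (1 - a) • y + a • x = y + a • (x - y) := by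
      rw [smul_sub, sub_smul, one_smul]; abel
    rw [harg] at hcv
    have hφ0 : φ 0 = h y := by simp [hφ]
    have hφa : φ a ≤ (1 - a) * h y + a * h x := hcv
    rw [slope_def_field, hφ0, sub_zero, div_le_iff₀ ha0]
    nlinarith
  have hle : ⟪p, x - y⟫ ≤ h x - h y :=
    le_of_tendsto (hslope.mono_left (nhdsWithin_mono (0:ℝ) (fun a (ha : a ∈ Set.Ioi (0:ℝ)) => (ne_of_gt ha : a ≠ 0)))) hev
  linarith

private lemma ereal_hasSum (A : ℕ → EReal) (hA : ∀ j, 0 ≤ A j) :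
    HasSum A (⨆ s : Finset ℕ, ∑ j ∈ s, A j) :=
  tendsto_atTop_iSup fun s t hst => Finset.sum_le_sum_of_subset_of_nonneg hst fun j _ _ => hA j

private lemma lp_ev_small (v : lp (fun _ : ℕ => ℝ) 2) {ε : ℝ} (hε : 0 < ε) :
    ∀ᶠ k in atTop, |v k| < ε := by
  have hm : Memℓp (⇑v) 2 := lp.memℓp v
  have hs : Summable fun k => ‖v k‖ ^ (2:ℝ≥0∞).toReal := hm.summable (by norm_num)
  have h0 : Tendsto (fun k => ‖v k‖ ^ (2:ℝ≥0∞).toReal) atTop (𝓝 0) := hs.tendsto_atTop_zero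
  filter_upwards [h0.eventually_lt_const (show (0:ℝ) < ε ^ 2 by positivity)] with k hk
  have h2 : |v k| ^ 2 < ε ^ 2 := by
    have he : (2:ℝ≥0∞).toReal = ((2:ℕ):ℝ) := by norm_num
    rwa [he, Real.rpow_natCast, Real.norm_eq_abs] at hk
  exact lt_of_pow_lt_pow_left₀ 2 hε.le h2

/-- Hypothesis (H): `f = g + h` on `X = ℓ²(ℕ)`, with `h` convex, bounded below,
differentiable with `L`-Lipschitz gradient `h'`, and
`g(x) = Σ_k [ψ_k(x_k) + σ_{I_k}(x_k)]`, each `I_k` a proper closed interval containing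
`[−ω, ω]` (`ω > 0`), each `ψ_k` proper convex lsc with `ψ_k(0) = 0` and `ψ_k'(0) = 0`
(encoded: `ψ_k` agrees near `0` with a real function having derivative `0` at `0`).
Then for every `x ∈ dom ∂f`, the extended support
`esupp(x) = supp(x) ∪ {k : −(∇h(x))_k ∈ bd I_k}` is finite. -/
theorem stmt_14 (ω L : ℝ) (hω : 0 < ω) (hL : 0 < L)
    (I : ℕ → Set ℝ) (hIcl : ∀ k, IsClosed (I k)) (hIconn : ∀ k, (I k).OrdConnected)
    (hIproper : ∀ k, I k ≠ Set.univ) (hIsub : ∀ k, Set.Icc (-ω) ω ⊆ I k)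
    (ψ : ℕ → ℝ → EReal)
    (hψconv : ∀ k, ∀ s t a b : ℝ, 0 ≤ a → 0 ≤ b → a + b = 1 →
      ψ k (a * s + b * t) ≤ (a : EReal) * ψ k s + (b : EReal) * ψ k t)
    (hψlsc : ∀ k, LowerSemicontinuous (ψ k))
    (hψbot : ∀ k t, ψ k t ≠ ⊥)
    (hψ0 : ∀ k, ψ k 0 = 0)
    (hψdiff : ∀ k, ∃ (F : ℝ → ℝ) (ε : ℝ), 0 < ε ∧
      (∀ t : ℝ, |t| < ε → ψ k t = (F t : EReal)) ∧ HasDerivAt F 0 0)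
    (h : lp (fun _ : ℕ => ℝ) 2 → ℝ) (h' : lp (fun _ : ℕ => ℝ) 2 → lp (fun _ : ℕ => ℝ) 2)
    (hhconv : ConvexOn ℝ Set.univ h) (hhbdd : BddBelow (Set.range h))
    (hhgrad : ∀ x, HasGradientAt h (h' x) x)
    (hhlip : LipschitzWith (Real.toNNReal L) h')
    (g f : lp (fun _ : ℕ => ℝ) 2 → EReal)
    (hg : ∀ x, g x = ∑' k, (ψ k (x k) + ⨆ s ∈ I k, ((s * x k : ℝ) : EReal)))
    (hf : ∀ x, f x = g x + ((h x : ℝ) : EReal))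
    (x : lp (fun _ : ℕ => ℝ) 2)
    (hxdom : ∃ u : lp (fun _ : ℕ => ℝ) 2, ∀ y,
      f x + ((⟪u, y - x⟫ : ℝ) : EReal) ≤ f y) :
    ({k : ℕ | x k ≠ 0} ∪ {k : ℕ | -(h' x k) ∈ frontier (I k)}).Finite := by
  classical
  obtain ⟨u, hu⟩ := hxdom
  have hψnn : ∀ k t, 0 ≤ ψ k t := fun k t =>
    psi_nonneg (ψ k) (hψconv k) (hψbot k) (hψ0 k) (hψdiff k) t
  have hσlb : ∀ k (t : ℝ), ((ω * |t| : ℝ) : EReal) ≤ ⨆ s ∈ I k, ((s * t : ℝ) : EReal) := by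
    intro k t
    rcases le_or_gt 0 t with ht | ht
    · have he : ω * |t| = ω * t := by rw [abs_of_nonneg ht]
      rw [he]
      exact le_iSup₂_of_le ω (hIsub k ⟨by linarith, le_refl ω⟩) (le_of_eq rfl)
    · have he : ω * |t| = (-ω) * t := by rw [abs_of_neg ht]; ring
      rw [he]
      exact le_iSup₂_of_le (-ω) (hIsub k ⟨le_refl _, by linarith⟩) (le_of_eq rfl)
  have hσnn : ∀ k (t : ℝ), (0:EReal) ≤ ⨆ s ∈ I k, ((s * t : ℝ) : EReal) := by
    intro k t
    refine le_trans ?_ (hσlb k t)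
    exact_mod_cast mul_nonneg hω.le (abs_nonneg t)
  have hσ0 : ∀ k, (⨆ s ∈ I k, ((s * (0:ℝ) : ℝ) : EReal)) = 0 := by
    intro k
    apply le_antisymm
    · apply iSup₂_le; intro s _; simp
    · exact hσnn k 0
  set A : (lp (fun _ : ℕ => ℝ) 2) → ℕ → EReal :=
    fun z j => ψ j (z j) + ⨆ s ∈ I j, ((s * z j : ℝ) : EReal) with hAdef
  have hAnn : ∀ z j, 0 ≤ A z j := fun z j => add_nonneg (hψnn j _) (hσnn j _)
  have hgsum : ∀ z, g z = ⨆ s : Finset ℕ, ∑ j ∈ s, A z j := fun z => by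
    rw [hg z]; exact (ereal_hasSum (A z) (hAnn z)).tsum_eq
  have hgnn : ∀ z, 0 ≤ g z := fun z => by
    rw [hgsum z]; exact le_iSup_of_le ∅ (by simp)
  have hAle : ∀ z k, A z k ≤ g z := fun z k => by
    rw [hgsum z]; exact le_iSup_of_le {k} (by simp)
  have hg0 : g 0 = 0 := by
    rw [hg 0]
    have hz : ∀ j : ℕ,
        (ψ j ((0 : lp (fun _ : ℕ => ℝ) 2) j) +
          ⨆ s ∈ I j, ((s * (0 : lp (fun _ : ℕ => ℝ) 2) j : ℝ) : EReal)) = 0 := by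
      intro j
      have h0j : (0 : lp (fun _ : ℕ => ℝ) 2) j = (0:ℝ) := by
        rw [lp.coeFn_zero]; rfl
      rw [h0j, hψ0 j, hσ0 j, add_zero]
    rw [tsum_congr hz, tsum_zero]
  have hfx0 := hu 0
  rw [hf x, hf 0, hg0, zero_add] at hfx0
  have hgxtop : g x ≠ ⊤ := by
    intro htop
    rw [htop, EReal.top_add_coe, EReal.top_add_coe] at hfx0
    exact absurd hfx0 (EReal.coe_lt_top _).not_ge
  have hgxbot : g x ≠ ⊥ := fun hb => by simpa [hb] using hgnn x
  set G : ℝ := (g x).toReal with hGdef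
  have hG : g x = (G : EReal) := (EReal.coe_toReal hgxtop hgxbot).symm
  -- main coordinatewise estimate
  have main : ∀ k : ℕ, x k ≠ 0 → ω ≤ |h' x k| + L * |x k| + |u k| := by
    intro k hk
    set c : ℝ := x k with hc
    set y : lp (fun _ : ℕ => ℝ) 2 := x - lp.single 2 k c with hy
    have hyapp : ∀ j, y j = x j - (lp.single 2 k c : lp (fun _ : ℕ => ℝ) 2) j := by
      intro j
      rw [hy, lp.coeFn_sub]; rfl
    have hyk : y k = 0 := by
      rw [hyapp k, lp.single_apply_self (E := fun _ : ℕ => ℝ) 2 k c, ← hc, sub_self]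
    have hyj : ∀ j, j ≠ k → y j = x j := fun j hj => by
      rw [hyapp j, lp.single_apply_ne (E := fun _ : ℕ => ℝ) 2 k c hj, sub_zero]
    have hBk : A y k = 0 := by
      simp only [hAdef]
      rw [hyk, hψ0 k, hσ0 k, add_zero]
    have hBA : ∀ j, A y j ≤ A x j := by
      intro j
      rcases eq_or_ne j k with rfl | hj
      · rw [hBk]; exact hAnn x j
      · simp only [hAdef]; rw [hyj j hj]
    have hgyle : g y ≤ g x := by
      rw [hgsum y, hgsum x]
      exact iSup_mono fun s => Finset.sum_le_sum fun j _ => hBA j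
    have hgytop : g y ≠ ⊤ := by
      intro ht
      exact hgxtop (top_le_iff.1 (by rw [← ht]; exact hgyle))
    have hgybot : g y ≠ ⊥ := fun hb => by simpa [hb] using hgnn y
    set G' : ℝ := (g y).toReal with hG'def
    have hG' : g y = (G' : EReal) := (EReal.coe_toReal hgytop hgybot).symm
    have hAktop : A x k ≠ ⊤ := by
      intro ht
      exact hgxtop (top_le_iff.1 (by rw [← ht]; exact hAle x k))
    have hAkbot : A x k ≠ ⊥ := fun hb => by simpa [hb] using hAnn x k
    set α : ℝ := (A x k).toReal with hαdef
    have hα : A x k = (α : EReal) := (EReal.coe_toReal hAktop hAkbot).symm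
    have hsplit : G' ≤ G - α := by
      have hsum : ∀ s : Finset ℕ, ∑ j ∈ s, A y j ≤ ((G - α : ℝ) : EReal) := by
        intro s
        have h1 : ∑ j ∈ s, A y j = ∑ j ∈ s.erase k, A x j := by
          rw [← Finset.sum_erase s hBk]
          exact Finset.sum_congr rfl fun j hj => by
            simp only [hAdef]; rw [hyj j (Finset.ne_of_mem_erase hj)]
        have h2 : ∑ j ∈ s.erase k, A x j + A x k ≤ (G : EReal) := by
          rw [← hG, hgsum x]
          refine le_iSup_of_le (insert k (s.erase k)) ?_
          rw [Finset.sum_insert (Finset.notMem_erase k s)]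
          exact le_of_eq (add_comm _ _)
        have h3 : ∑ j ∈ s, A y j ≤ (G : EReal) - (α : EReal) := by
          rw [h1]
          refine (EReal.le_sub_iff_add_le (Or.inl (EReal.coe_ne_bot α))
            (Or.inl (EReal.coe_ne_top α))).2 ?_
          rw [← hα]; exact h2
        rwa [← EReal.coe_sub] at h3
      have hh : g y ≤ ((G - α : ℝ) : EReal) := by
        rw [hgsum y]; exact iSup_le hsum
      rw [hG'] at hh
      exact_mod_cast hh
    have hyx : y - x = -(lp.single 2 k c) := by rw [hy]; abel
    have hxy : x - y = lp.single 2 k c := by rw [hy]; abel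
    have hinner : ⟪u, y - x⟫ = -(u k * c) := by
      rw [hyx, inner_neg_right, lp.inner_single_right]
      norm_num [RCLike.inner_apply, starRingEnd_apply]
      ring
    have hkey := hu y
    rw [hf x, hf y, hG, hG', hinner] at hkey
    have hkeyR : G + h x + -(u k * c) ≤ G' + h y := by exact_mod_cast hkey
    have hgr := grad_ineq hhconv (hhgrad y) x
    have hinner2 : ⟪h' y, x - y⟫ = h' y k * c := by
      rw [hxy, lp.inner_single_right]
      norm_num [RCLike.inner_apply, starRingEnd_apply]
      ring
    rw [hinner2] at hgr
    have hnormyx : ‖y - x‖ = |c| := by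
      rw [hyx, norm_neg]
      have := lp.norm_single (E := fun _ : ℕ => ℝ) (p := 2) (by norm_num) k c
      rw [this, Real.norm_eq_abs]
    have hlipk : |h' y k - h' x k| ≤ L * |c| := by
      have h1 : ‖(h' y - h' x) k‖ ≤ ‖h' y - h' x‖ :=
        lp.norm_apply_le_norm (by norm_num) (h' y - h' x) k
      have h2 : ‖h' y - h' x‖ ≤ L * |c| := by
        have hd := hhlip.dist_le_mul y x
        rw [dist_eq_norm, dist_eq_norm, hnormyx, Real.coe_toNNReal L hL.le] at hd
        exact hd
      have h3 : (h' y - h' x) k = h' y k - h' x k := by rw [lp.coeFn_sub]; rfl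
      rw [h3, Real.norm_eq_abs] at h1
      linarith
    have hαlb : ω * |c| ≤ α := by
      have hle : ((ω * |c| : ℝ) : EReal) ≤ A x k := by
        simp only [hAdef]
        rw [← hc]
        exact le_trans (hσlb k c) (le_add_of_nonneg_left (hψnn k _))
      rw [hα] at hle
      exact_mod_cast hle
    have habs1 : |h' y k| ≤ |h' x k| + L * |c| := by
      have := abs_sub_abs_le_abs_sub (h' y k) (h' x k)
      linarith
    have e1 : α ≤ h y - h x + u k * c := by linarith
    have e2 : h y - h x ≤ -(h' y k * c) := by linarith
    have e3 : -(h' y k * c) ≤ |h' y k| * |c| := by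
      calc -(h' y k * c) ≤ |h' y k * c| := neg_le_abs _
        _ = |h' y k| * |c| := abs_mul _ _
    have e4 : u k * c ≤ |u k| * |c| := by
      calc u k * c ≤ |u k * c| := le_abs_self _
        _ = |u k| * |c| := abs_mul _ _
    have hineq : ω * |c| ≤ (|h' x k| + L * |c| + |u k|) * |c| := by
      nlinarith [abs_nonneg c]
    have hcpos : 0 < |c| := abs_pos.2 hk
    exact le_of_mul_le_mul_right hineq hcpos
  -- finiteness of the dominating set
  have hfin : {k : ℕ | ω ≤ |h' x k| + L * |x k| + |u k|}.Finite := by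
    have h1 := lp_ev_small (h' x) (show (0:ℝ) < ω/3 by linarith)
    have h2 := lp_ev_small x (show (0:ℝ) < ω/(3*L) by positivity)
    have h3 := lp_ev_small u (show (0:ℝ) < ω/3 by linarith)
    have hev : ∀ᶠ k in Filter.cofinite, ¬ ω ≤ |h' x k| + L * |x k| + |u k| := by
      rw [Nat.cofinite_eq_atTop]
      filter_upwards [h1, h2, h3] with k e1 e2 e3
      push_neg
      have hxk : L * |x k| < ω/3 := by
        calc L * |x k| < L * (ω/(3*L)) := mul_lt_mul_of_pos_left e2 hL
          _ = ω/3 := by field_simp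
      linarith
    simpa using Filter.eventually_cofinite.1 hev
  refine hfin.subset ?_
  rintro k (hk | hk)
  · exact main k hk
  · simp only [Set.mem_setOf_eq] at hk
    have hωe : ω ≤ |h' x k| := by
      by_contra hlt
      push_neg at hlt
      obtain ⟨hlt1, hlt2⟩ := abs_lt.1 hlt
      have hmem : -(h' x k) ∈ interior (I k) := by
        have hio : -(h' x k) ∈ Set.Ioo (-ω) ω := ⟨by linarith, by linarith⟩
        have hint : Set.Ioo (-ω) ω ⊆ interior (I k) := by
          rw [← interior_Icc]; exact interior_mono (hIsub k)
        exact hint hio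
      rw [(hIcl k).frontier_eq] at hk
      exact hk.2 hmem
    have hb1 : (0:ℝ) ≤ L * |x k| := by positivity
    have hb2 : (0:ℝ) ≤ |u k| := abs_nonneg _
    simp only [Set.mem_setOf_eq]
    linarith
end

section
/- Under hypothesis (H), let x̄ ∈ argmin f. If 0 belongs to the quasi-relative interior of ∂f(x̄), then the extended support of x̄ equals its support: esupp(x̄) = supp(x̄). -/
open scoped RealInnerProductSpace
open Filter Topology

lemma ereal_coe_sum (a : ℕ → ℝ) (s : Finset ℕ) :
    ((∑ j ∈ s, a j : ℝ) : EReal) = ∑ j ∈ s, ((a j : EReal)) := by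
  induction s using Finset.induction with
  | empty => simp
  | insert _ _ h ih => rw [Finset.sum_insert h, Finset.sum_insert h, EReal.coe_add, ih]

lemma ereal_hasSum_nonneg (a : ℕ → EReal) (ha : ∀ j, 0 ≤ a j) :
    HasSum a (⨆ s : Finset ℕ, ∑ j ∈ s, a j) :=
  tendsto_atTop_iSup fun s t hst =>
    Finset.sum_le_sum_of_subset_of_nonneg hst fun j _ _ => ha j

lemma ereal_sum_le_tsum (a : ℕ → EReal) (ha : ∀ j, 0 ≤ a j) (s : Finset ℕ) :
    ∑ j ∈ s, a j ≤ ∑' j, a j := by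
  rw [(ereal_hasSum_nonneg a ha).tsum_eq]
  exact le_iSup (fun s : Finset ℕ => ∑ j ∈ s, a j) s

lemma ereal_le_tsum' (a : ℕ → EReal) (ha : ∀ j, 0 ≤ a j) (k : ℕ) :
    a k ≤ ∑' j, a j := by
  simpa using ereal_sum_le_tsum a ha {k}

lemma ereal_tsum_nonneg (a : ℕ → EReal) (ha : ∀ j, 0 ≤ a j) : 0 ≤ ∑' j, a j := by
  simpa using ereal_sum_le_tsum a ha ∅

lemma real_hasSum_of_ereal (a : ℕ → ℝ) (G : ℝ) (ha : ∀ j, 0 ≤ a j)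
    (h : (∑' j, ((a j : EReal))) = (G : EReal)) : HasSum a G := by
  have hs : HasSum (fun j => (a j : EReal)) (⨆ s : Finset ℕ, ∑ j ∈ s, ((a j : EReal))) :=
    ereal_hasSum_nonneg _ fun j => by exact_mod_cast ha j
  rw [hs.tsum_eq] at h
  rw [h] at hs
  have : Tendsto (fun s : Finset ℕ => ((∑ j ∈ s, a j : ℝ) : EReal)) atTop (𝓝 ((G : ℝ) : EReal)) :=
    hs.congr fun s => (ereal_coe_sum a s).symm
  exact EReal.tendsto_coe.1 this

lemma key_sum_le (a w : ℕ → ℝ) (A W : ℝ) (b : ℕ → EReal) (hb : ∀ j, 0 ≤ b j)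
    (hA : HasSum a A) (hW : HasSum w W)
    (hle : ∀ j, ((a j + w j : ℝ) : EReal) ≤ b j) :
    ((A + W : ℝ) : EReal) ≤ ∑' j, b j := by
  have key : ∀ s : Finset ℕ, ((∑ j ∈ s, (a j + w j) : ℝ) : EReal) ≤ ∑' j, b j := fun s => by
    rw [ereal_coe_sum]
    exact (Finset.sum_le_sum fun j _ => hle j).trans (ereal_sum_le_tsum b hb s)
  have ht : Tendsto (fun s : Finset ℕ => ((∑ j ∈ s, (a j + w j) : ℝ) : EReal)) atTop
      (𝓝 ((A + W : ℝ) : EReal)) := EReal.tendsto_coe.2 (hA.add hW)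
  exact le_of_tendsto ht (Eventually.of_forall key)

lemma tsum_update_le (a : ℕ → ℝ) (G : ℝ) (ha : ∀ j, 0 ≤ a j) (hA : HasSum a G)
    (b : ℕ → EReal) (hb : ∀ j, 0 ≤ b j) (k : ℕ) (heq : ∀ j, j ≠ k → b j = ((a j : EReal))) :
    ∑' j, b j ≤ ((G - a k : ℝ) : EReal) + b k := by
  rw [(ereal_hasSum_nonneg b hb).tsum_eq]
  refine iSup_le fun s => ?_
  have h1 : ∑ j ∈ s, b j ≤ ∑ j ∈ s.erase k, b j + b k := by
    by_cases hk : k ∈ s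
    · rw [add_comm, Finset.add_sum_erase _ _ hk]
    · rw [Finset.erase_eq_of_notMem hk]
      exact le_add_of_nonneg_right (hb k)
  refine h1.trans (add_le_add ?_ le_rfl)
  have h2 : ∑ j ∈ s.erase k, b j = ((∑ j ∈ s.erase k, a j : ℝ) : EReal) := by
    rw [ereal_coe_sum]
    exact Finset.sum_congr rfl fun j hj => heq j (Finset.ne_of_mem_erase hj)
  rw [h2]
  apply EReal.coe_le_coe_iff.2
  have h3 : ∑ j ∈ insert k (s.erase k), a j ≤ G := sum_le_hasSum _ (fun j _ => ha j) hA
  rw [Finset.sum_insert (Finset.notMem_erase k s)] at h3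
  linarith

lemma ereal_real_le (p q : ℝ) (φ : EReal) (h0 : φ ≠ ⊥) (h : (p : EReal) ≤ (q : EReal) + φ) :
    ((p - q : ℝ) : EReal) ≤ φ := by
  induction φ using EReal.rec with
  | bot => exact absurd rfl h0
  | coe r =>
      rw [← EReal.coe_add] at h
      exact EReal.coe_le_coe_iff.2 (by linarith [EReal.coe_le_coe_iff.1 h])
  | top => exact le_top

lemma ereal_add_fin (x y : EReal) (hx : x ≠ ⊥) (hy : y ≠ ⊥) (r : ℝ)
    (hxy : x + y = (r : EReal)) :
    ∃ p q : ℝ, x = (p : EReal) ∧ y = (q : EReal) ∧ p + q = r := by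
  have hxt : x ≠ ⊤ := by
    rintro rfl
    rw [EReal.top_add_of_ne_bot hy] at hxy
    exact EReal.top_ne_coe _ hxy
  have hyt : y ≠ ⊤ := by
    rintro rfl
    rw [EReal.add_top_of_ne_bot hx] at hxy
    exact EReal.top_ne_coe _ hxy
  refine ⟨x.toReal, y.toReal, (EReal.coe_toReal hxt hx).symm, (EReal.coe_toReal hyt hy).symm, ?_⟩
  rw [← (EReal.coe_toReal hxt hx), ← (EReal.coe_toReal hyt hy), ← EReal.coe_add] at hxy
  exact_mod_cast hxy

lemma frontier_lub (Ik : Set ℝ) (hcl : IsClosed Ik) (hconn : Ik.OrdConnected)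
    (z : ℝ) (hz : z ∈ frontier Ik) : IsLUB Ik z ∨ IsGLB Ik z := by
  rw [hcl.frontier_eq] at hz
  obtain ⟨hzI, hni⟩ := hz
  by_contra hcon
  push_neg at hcon
  obtain ⟨h1, h2⟩ := hcon
  have hub : ∃ p ∈ Ik, z < p := by
    by_contra hp; push_neg at hp
    exact h1 ⟨fun c hc => hp c hc, fun b hb => hb hzI⟩
  have hlb : ∃ q ∈ Ik, q < z := by
    by_contra hq; push_neg at hq
    exact h2 ⟨fun c hc => hq c hc, fun b hb => hb hzI⟩
  obtain ⟨p, hp, hzp⟩ := hub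
  obtain ⟨q, hq, hqz⟩ := hlb
  have hsub : Set.Ioo q p ⊆ Ik := fun w hw => hconn.out hq hp ⟨hw.1.le, hw.2.le⟩
  exact hni (interior_maximal hsub isOpen_Ioo ⟨hqz, hzp⟩)

lemma dirderiv {E : Type*} [NormedAddCommGroup E] [InnerProductSpace ℝ E] [CompleteSpace E]
    (h : E → ℝ) (h' x v : E) (hg : HasGradientAt h h' x) :
    HasDerivAt (fun l : ℝ => h (x + l • v)) ⟪h', v⟫ 0 := by
  have hF := hasGradientAt_iff_hasFDerivAt.1 hg
  have hc : HasDerivAt (fun l : ℝ => x + l • v) v 0 := by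
    simpa using ((hasDerivAt_id (0 : ℝ)).smul_const v).const_add x
  have h2 : HasFDerivAt h ((InnerProductSpace.toDual ℝ E) h') (x + (0 : ℝ) • v) := by simpa using hF
  have := h2.comp_hasDerivAt 0 hc
  simpa [InnerProductSpace.toDual_apply_apply, Function.comp_def] using this

lemma diffquot_tendsto {E : Type*} [NormedAddCommGroup E] [InnerProductSpace ℝ E] [CompleteSpace E]
    (h : E → ℝ) (h' x : E) (hg : HasGradientAt h h' x) (v : E) (s : Set ℝ) (hs : s ⊆ {(0:ℝ)}ᶜ) :
    Tendsto (fun l : ℝ => (h (x + l • v) - h x) / l) (𝓝[s] 0) (𝓝 ⟪h', v⟫) := by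
  have hd := dirderiv h h' x v hg
  have h1 := (hasDerivAt_iff_tendsto_slope.1 hd).mono_left (nhdsWithin_mono _ hs)
  refine h1.congr fun l => ?_
  simp [slope_def_field]

lemma slope_tendsto (F : ℝ → ℝ) (c : ℝ) (hF : HasDerivAt F c 0) (hF0 : F 0 = 0)
    (s : Set ℝ) (hs : s ⊆ {(0:ℝ)}ᶜ) :
    Tendsto (fun t => F t / t) (𝓝[s] 0) (𝓝 c) := by
  have h1 := (hasDerivAt_iff_tendsto_slope.1 hF).mono_left (nhdsWithin_mono _ hs)
  refine h1.congr fun t => ?_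
  simp [slope_def_field, hF0]

lemma eval_cont (k : ℕ) : Continuous fun x : lp (fun _ : ℕ => ℝ) 2 => x k := by
  refine (LipschitzWith.of_dist_le_mul (K := 1) fun x y => ?_).continuous
  rw [dist_eq_norm, dist_eq_norm]
  push_cast
  rw [one_mul]
  have : x k - y k = (x - y) k := by simp [lp.coeFn_sub]
  rw [this]
  exact lp.norm_apply_le_norm (by norm_num) (x - y) k

local notation "XX" => lp (fun _ : ℕ => ℝ) 2

set_option maxHeartbeats 4000000 in
/-- Hypothesis (H): `f = g + h` on `X = ℓ²(ℕ)`, with `h` convex, bounded below,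
differentiable with `L`-Lipschitz gradient `h'`, and
`g(x) = Σ_k [ψ_k(x_k) + σ_{I_k}(x_k)]`, each `I_k` a proper closed interval containing
`[−ω, ω]` (`ω > 0`), each `ψ_k` proper convex lsc with `ψ_k(0) = 0` and `ψ_k'(0) = 0`
(encoded: `ψ_k` agrees near `0` with a real function having derivative `0` at `0`).
Let `x̄ ∈ argmin f`.  If `0` belongs to the quasi-relative interior of `∂f(x̄)`
(i.e. `0 ∈ ∂f(x̄)` and the closure of the cone generated by `∂f(x̄) − 0` is a closed
linear subspace), then `esupp(x̄) = supp(x̄)`. -/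
theorem stmt_15 (ω L : ℝ) (hω : 0 < ω) (hL : 0 < L)
    (I : ℕ → Set ℝ) (hIcl : ∀ k, IsClosed (I k)) (hIconn : ∀ k, (I k).OrdConnected)
    (hIproper : ∀ k, I k ≠ Set.univ) (hIsub : ∀ k, Set.Icc (-ω) ω ⊆ I k)
    (ψ : ℕ → ℝ → EReal)
    (hψconv : ∀ k, ∀ s t a b : ℝ, 0 ≤ a → 0 ≤ b → a + b = 1 →
      ψ k (a * s + b * t) ≤ (a : EReal) * ψ k s + (b : EReal) * ψ k t)
    (hψlsc : ∀ k, LowerSemicontinuous (ψ k))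
    (hψbot : ∀ k t, ψ k t ≠ ⊥)
    (hψ0 : ∀ k, ψ k 0 = 0)
    (hψdiff : ∀ k, ∃ (F : ℝ → ℝ) (ε : ℝ), 0 < ε ∧
      (∀ t : ℝ, |t| < ε → ψ k t = (F t : EReal)) ∧ HasDerivAt F 0 0)
    (h : lp (fun _ : ℕ => ℝ) 2 → ℝ) (h' : lp (fun _ : ℕ => ℝ) 2 → lp (fun _ : ℕ => ℝ) 2)
    (hhconv : ConvexOn ℝ Set.univ h) (hhbdd : BddBelow (Set.range h))
    (hhgrad : ∀ x, HasGradientAt h (h' x) x)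
    (hhlip : LipschitzWith (Real.toNNReal L) h')
    (g f : lp (fun _ : ℕ => ℝ) 2 → EReal)
    (hg : ∀ x, g x = ∑' k, (ψ k (x k) + ⨆ s ∈ I k, ((s * x k : ℝ) : EReal)))
    (hf : ∀ x, f x = g x + ((h x : ℝ) : EReal))
    (xbar : lp (fun _ : ℕ => ℝ) 2)
    (hmin : ∀ y, f xbar ≤ f y)
    (hqri : (∀ y, f xbar + ((⟪(0 : lp (fun _ : ℕ => ℝ) 2), y - xbar⟫ : ℝ) : EReal) ≤ f y)
      ∧ ∃ S : Submodule ℝ (lp (fun _ : ℕ => ℝ) 2),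
        closure {z : lp (fun _ : ℕ => ℝ) 2 | ∃ t : ℝ, 0 ≤ t ∧
            ∃ u : lp (fun _ : ℕ => ℝ) 2,
              (∀ y, f xbar + ((⟪u, y - xbar⟫ : ℝ) : EReal) ≤ f y) ∧ z = t • u}
          = (S : Set (lp (fun _ : ℕ => ℝ) 2))) :
    {k : ℕ | xbar k ≠ 0} ∪ {k : ℕ | -(h' xbar k) ∈ frontier (I k)}
      = {k : ℕ | xbar k ≠ 0} := by
  rw [Set.union_eq_left]
  intro k hk
  simp only [Set.mem_setOf_eq] at hk ⊢
  by_contra hk0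
  -- notation
  set σ' : ℕ → ℝ → EReal := fun j t => ⨆ s ∈ I j, ((s * t : ℝ) : EReal) with hσ'
  set φ : ℕ → ℝ → EReal := fun j t => ψ j t + σ' j t with hφ
  have hgφ : ∀ x : XX, g x = ∑' j, φ j (x j) := fun x => hg x
  set e : ℕ → XX := fun j => lp.single 2 j (1 : ℝ) with he'
  have he : ∀ j i, e j i = if i = j then (1 : ℝ) else 0 := by
    intro j i
    by_cases hij : i = j
    · subst hij; rw [if_pos rfl]; exact lp.single_apply_self 2 i 1
    · rw [if_neg hij]; exact lp.single_apply_ne 2 j 1 hij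
  have hco : ∀ (j : ℕ) (t : ℝ) (i : ℕ), (xbar + t • e j) i = xbar i + (if i = j then t else 0) := by
    intro j t i
    have : (xbar + t • e j) i = xbar i + t * e j i := by
      simp [lp.coeFn_add, lp.coeFn_smul, Pi.add_apply, Pi.smul_apply, smul_eq_mul]
      rfl
    rw [this, he]
    by_cases hij : i = j <;> simp [hij]
  have hinner : ∀ (u : XX) (j : ℕ) (t : ℝ), ⟪u, t • e j⟫ = t * u j := by
    intro u j t
    have h1 : ⟪u, t • e j⟫ = t * ⟪u, e j⟫ := real_inner_smul_right u (e j) t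
    have h2 : ⟪u, e j⟫ = u j * 1 := (lp.inner_single_right (𝕜 := ℝ) j 1 u).trans (Real.inner_apply _ _)
    rw [h1, h2]; ring
  -- basic nonnegativity facts
  have hσle : ∀ (j : ℕ) (t c : ℝ), c ∈ I j → ((c * t : ℝ) : EReal) ≤ σ' j t := by
    intro j t c hc
    exact le_iSup₂ (f := fun s (_ : s ∈ I j) => ((s * t : ℝ) : EReal)) c hc
  have h0I : ∀ j, (0 : ℝ) ∈ I j := fun j => hIsub j ⟨by linarith, by linarith⟩
  have hσnn : ∀ j t, (0 : EReal) ≤ σ' j t := by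
    intro j t
    simpa using hσle j t 0 (h0I j)
  have hσ0 : ∀ j, σ' j 0 = 0 := by
    intro j
    refine le_antisymm (iSup₂_le fun s _ => by simp) (hσnn j 0)
  have hψnn : ∀ j t, (0 : EReal) ≤ ψ j t := by
    intro j t
    obtain ⟨F, ε, hε, hFψ, hFd⟩ := hψdiff j
    have hF0 : F 0 = 0 := by
      have h1 := hFψ 0 (by simpa using hε)
      rw [hψ0 j] at h1
      exact_mod_cast h1.symm
    by_cases ht : t = 0
    · rw [ht, hψ0 j]
    rcases eq_or_ne (ψ j t) ⊤ with htop | htop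
    · rw [htop]; exact le_top
    obtain ⟨r, hr⟩ : ∃ r : ℝ, ψ j t = (r : EReal) :=
      ⟨(ψ j t).toReal, (EReal.coe_toReal htop (hψbot j t)).symm⟩
    rw [hr]
    have key : ∀ l : ℝ, 0 < l → l ≤ 1 → |l * t| < ε → F (l * t) / l ≤ r := by
      intro l hl hl1 hlt
      have hc := hψconv j t 0 l (1 - l) hl.le (by linarith) (by ring)
      rw [hψ0 j, mul_zero, add_zero, hr] at hc
      rw [hFψ _ hlt] at hc
      have hc2 : ((F (l * t) : ℝ) : EReal) ≤ ((l * r : ℝ) : EReal) := by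
        rw [EReal.coe_mul]
        simpa using hc
      have hc3 := EReal.coe_le_coe_iff.1 hc2
      rw [div_le_iff₀ hl]
      linarith
    have hmul : Tendsto (fun l : ℝ => l * t) (𝓝[>] (0:ℝ)) (𝓝[({0}ᶜ : Set ℝ)] 0) := by
      rw [tendsto_nhdsWithin_iff]
      constructor
      · have h1 : Tendsto (fun l : ℝ => l * t) (𝓝 0) (𝓝 (0 * t)) :=
          (continuous_id.mul continuous_const).tendsto 0
        rw [zero_mul] at h1
        exact h1.mono_left nhdsWithin_le_nhds
      · filter_upwards [self_mem_nhdsWithin] with l hl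
        simpa using mul_ne_zero (ne_of_gt hl) ht
    have hcomp := (slope_tendsto F 0 hFd hF0 ({0}ᶜ : Set ℝ) subset_rfl).comp hmul
    have htt : Tendsto (fun l : ℝ => F (l * t) / l) (𝓝[>] (0:ℝ)) (𝓝 0) := by
      have h1 : Tendsto (fun l : ℝ => t * (F (l * t) / (l * t))) (𝓝[>] (0:ℝ)) (𝓝 (t * 0)) :=
        tendsto_const_nhds.mul hcomp
      rw [mul_zero] at h1
      refine h1.congr' ?_
      filter_upwards [self_mem_nhdsWithin] with l hl
      have hl0 : l ≠ 0 := ne_of_gt hl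
      field_simp
    have hev : ∀ᶠ l in 𝓝[>] (0:ℝ), F (l * t) / l ≤ r := by
      have hδ : (0:ℝ) < min 1 (ε / (|t| + 1)) := by
        refine lt_min one_pos ?_
        positivity
      filter_upwards [Ioo_mem_nhdsGT_of_mem (Set.left_mem_Ico.2 hδ)] with l hl
      refine key l hl.1 (le_trans hl.2.le (min_le_left _ _)) ?_
      have h2 : l < ε / (|t| + 1) := lt_of_lt_of_le hl.2 (min_le_right _ _)
      have h3 : |l * t| = l * |t| := by rw [abs_mul, abs_of_pos hl.1]
      rw [h3]
      have h4 : l * (|t| + 1) < ε := by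
        rw [← lt_div_iff₀ (by positivity)]
        exact h2
      nlinarith [abs_nonneg t, hl.1]
    have := le_of_tendsto htt hev
    exact_mod_cast this
  have hφnn : ∀ j t, (0 : EReal) ≤ φ j t := fun j t => add_nonneg (hψnn j t) (hσnn j t)
  have hφnb : ∀ j t, φ j t ≠ ⊥ := by
    intro j t hbot
    have := hφnn j t
    rw [hbot] at this
    simp at this
  have hσnb : ∀ j t, σ' j t ≠ ⊥ := by
    intro j t hbot
    have := hσnn j t
    rw [hbot] at this
    simp at this
  have hφ0 : ∀ j, φ j 0 = 0 := fun j => by rw [hφ]; simp only; rw [hψ0 j, hσ0 j, add_zero]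
  -- finiteness of g xbar
  have hg0 : g (0 : XX) = 0 := by
    rw [hgφ]
    have : ∀ j, φ j ((0 : XX) j) = 0 := by
      intro j
      have h0 : (0 : XX) j = 0 := by simp [lp.coeFn_zero]
      rw [h0, hφ0]
    rw [tsum_congr this, tsum_zero]
  have hgxnn : 0 ≤ g xbar := by
    rw [hgφ]; exact ereal_tsum_nonneg _ fun j => hφnn j _
  have hgxne : g xbar ≠ ⊤ := by
    intro htop
    have h1 := hmin 0
    rw [hf xbar, hf 0, hg0, htop, zero_add] at h1
    rw [EReal.top_add_coe] at h1
    exact absurd h1 (not_le.2 (EReal.coe_lt_top _))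
  set G : ℝ := (g xbar).toReal with hGdef
  have hG : g xbar = (G : EReal) := by
    rw [hGdef]
    exact (EReal.coe_toReal hgxne (by intro hbot; rw [hbot] at hgxnn; simp at hgxnn)).symm
  set ta : ℕ → ℝ := fun j => (φ j (xbar j)).toReal with hta'
  have hφfin : ∀ j, φ j (xbar j) ≠ ⊤ := by
    intro j htop
    have h1 : φ j (xbar j) ≤ g xbar := by
      rw [hgφ]; exact ereal_le_tsum' _ (fun i => hφnn i _) j
    rw [htop, hG] at h1
    exact absurd h1 (not_le.2 (EReal.coe_lt_top _))
  have hta : ∀ j, φ j (xbar j) = ((ta j : ℝ) : EReal) :=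
    fun j => (EReal.coe_toReal (hφfin j) (hφnb j _)).symm
  have htann : ∀ j, 0 ≤ ta j := by
    intro j
    have := hφnn j (xbar j)
    rw [hta j] at this
    exact_mod_cast this
  have hHa : HasSum ta G := by
    refine real_hasSum_of_ereal ta G htann ?_
    rw [← hG, hgφ xbar]
    exact tsum_congr fun j => (hta j).symm
  have hfxbar : f xbar = ((G + h xbar : ℝ) : EReal) := by
    rw [hf xbar, hG, EReal.coe_add]
  have htak : ta k = 0 := by
    have h1 : φ k (xbar k) = 0 := by rw [hk0, hφ0]
    have := hta k
    rw [h1] at this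
    exact_mod_cast this.symm
  -- convexity of h via gradient
  have hconvh : ∀ y : XX, h xbar + ⟪h' xbar, y - xbar⟫ ≤ h y := by
    intro y
    have hq := diffquot_tendsto h (h' xbar) xbar (hhgrad xbar) (y - xbar) (Set.Ioi 0)
      (fun l hl => by simpa using ne_of_gt hl)
    have hineq : ∀ᶠ l in 𝓝[>] (0:ℝ), (h (xbar + l • (y - xbar)) - h xbar) / l ≤ h y - h xbar := by
      filter_upwards [Ioc_mem_nhdsGT_of_mem (Set.left_mem_Ico.2 one_pos)] with l hl
      have hc := hhconv.2 (Set.mem_univ xbar) (Set.mem_univ y)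
        (show (0:ℝ) ≤ 1 - l by linarith [hl.2]) (show (0:ℝ) ≤ l from hl.1.le) (by ring)
      rw [show (1 - l) • xbar + l • y = xbar + l • (y - xbar) by module] at hc
      simp only [smul_eq_mul] at hc
      rw [div_le_iff₀ hl.1]
      nlinarith [hc]
    have := le_of_tendsto hq hineq
    linarith
  -- componentwise subgradient: L4
  have stepA : ∀ (j : ℕ) (s : ℝ),
      ((ta j + (h xbar - h (xbar + s • e j)) : ℝ) : EReal) ≤ φ j (xbar j + s) := by
    intro j s
    set y := xbar + s • e j with hy
    have hyj : ∀ i, i ≠ j → y i = xbar i := by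
      intro i hij; rw [hy, hco]; simp [hij]
    have hyjj : y j = xbar j + s := by rw [hy, hco]; simp
    have hgy : g y ≤ ((G - ta j : ℝ) : EReal) + φ j (xbar j + s) := by
      rw [hgφ y]
      have h1 := tsum_update_le ta G htann hHa (fun i => φ i (y i)) (fun i => hφnn i _) j
        (fun i hij => by show φ i (y i) = _; rw [hyj i hij, hta i])
      simp only at h1
      rw [hyjj] at h1
      exact h1
    have hmin' := hmin y
    rw [hf y, hfxbar] at hmin'
    have h2 : ((G + h xbar : ℝ) : EReal) ≤ ((G - ta j + h y : ℝ) : EReal) + φ j (xbar j + s) := by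
      refine hmin'.trans ?_
      calc g y + ((h y : ℝ) : EReal)
          ≤ (((G - ta j : ℝ) : EReal) + φ j (xbar j + s)) + ((h y : ℝ) : EReal) :=
            add_le_add hgy le_rfl
        _ = ((G - ta j + h y : ℝ) : EReal) + φ j (xbar j + s) := by
            rw [add_right_comm, EReal.coe_add]
    have h3 := ereal_real_le _ _ _ (hφnb j _) h2
    rw [show G + h xbar - (G - ta j + h y) = ta j + (h xbar - h y) by ring] at h3
    exact h3
  have L4 : ∀ (j : ℕ) (s : ℝ), ((ta j - h' xbar j * s : ℝ) : EReal) ≤ φ j (xbar j + s) := by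
    intro j s
    rcases eq_or_ne (φ j (xbar j + s)) ⊤ with htop | htop
    · rw [htop]; exact le_top
    obtain ⟨A, hA⟩ : ∃ A : ℝ, φ j (xbar j + s) = (A : EReal) :=
      ⟨_, (EReal.coe_toReal htop (hφnb j _)).symm⟩
    have key : ∀ l : ℝ, 0 < l → l ≤ 1 →
        ta j + (h xbar - h (xbar + (l * s) • e j)) ≤ (1 - l) * ta j + l * A := by
      intro l hl hl1
      have hψc := hψconv j (xbar j + s) (xbar j) l (1 - l) hl.le (by linarith) (by ring)
      rw [show l * (xbar j + s) + (1 - l) * (xbar j) = xbar j + l * s by ring] at hψc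
      have hσc : σ' j (xbar j + l * s) ≤
          (l : EReal) * σ' j (xbar j + s) + ((1 - l : ℝ) : EReal) * σ' j (xbar j) := by
        refine iSup₂_le fun c hc => ?_
        have hb1 := hσle j (xbar j + s) c hc
        have hb2 := hσle j (xbar j) c hc
        have heq : ((c * (xbar j + l * s) : ℝ) : EReal)
            = (l : EReal) * ((c * (xbar j + s) : ℝ) : EReal)
              + ((1 - l : ℝ) : EReal) * ((c * (xbar j) : ℝ) : EReal) := by
          rw [← EReal.coe_mul, ← EReal.coe_mul, ← EReal.coe_add]
          norm_cast
          ring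
        rw [heq]
        exact add_le_add
              (mul_le_mul_of_nonneg_left hb1 (by exact_mod_cast hl.le))
              (mul_le_mul_of_nonneg_left hb2 (by exact_mod_cast (by linarith : (0:ℝ) ≤ 1 - l)))
      obtain ⟨p1, p2, hp1, hp2, hp⟩ := ereal_add_fin (ψ j (xbar j)) (σ' j (xbar j))
        (hψbot j _) (hσnb j _) (ta j) (by rw [← hta j])
      obtain ⟨q1, q2, hq1, hq2, hq⟩ := ereal_add_fin (ψ j (xbar j + s)) (σ' j (xbar j + s))
        (hψbot j _) (hσnb j _) A (by rw [← hA])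
      have hub : φ j (xbar j + l * s) ≤ (((1 - l) * ta j + l * A : ℝ) : EReal) := by
        calc φ j (xbar j + l * s) = ψ j (xbar j + l * s) + σ' j (xbar j + l * s) := rfl
          _ ≤ ((l : EReal) * ψ j (xbar j + s) + ((1 - l : ℝ) : EReal) * ψ j (xbar j))
              + ((l : EReal) * σ' j (xbar j + s) + ((1 - l : ℝ) : EReal) * σ' j (xbar j)) :=
            add_le_add hψc hσc
          _ = (((l * q1 + (1 - l) * p1) + (l * q2 + (1 - l) * p2) : ℝ) : EReal) := by
              rw [hp1, hp2, hq1, hq2, ← EReal.coe_mul, ← EReal.coe_mul, ← EReal.coe_mul,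
                ← EReal.coe_mul, ← EReal.coe_add, ← EReal.coe_add, ← EReal.coe_add]
          _ = _ := by
              norm_cast
              linear_combination l * hq + (1 - l) * hp
      exact EReal.coe_le_coe_iff.1 ((stepA j (l * s)).trans hub)
    have hderiv := diffquot_tendsto h (h' xbar) xbar (hhgrad xbar) (s • e j) (Set.Ioi 0)
      (fun l hl => by simpa using ne_of_gt hl)
    rw [hinner (h' xbar) j s] at hderiv
    have hlim : Tendsto (fun l : ℝ => ta j - (h (xbar + l • (s • e j)) - h xbar) / l)
        (𝓝[>] (0:ℝ)) (𝓝 (ta j - s * h' xbar j)) := tendsto_const_nhds.sub hderiv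
    have hev : ∀ᶠ l in 𝓝[>] (0:ℝ),
        ta j - (h (xbar + l • (s • e j)) - h xbar) / l ≤ A := by
      filter_upwards [Ioc_mem_nhdsGT_of_mem (Set.left_mem_Ico.2 one_pos)] with l hl
      have hk' := key l hl.1 hl.2
      rw [mul_smul] at hk'
      have h5 : l * (ta j - (h (xbar + l • (s • e j)) - h xbar) / l) ≤ l * A := by
        rw [mul_sub, mul_div_cancel₀ _ (ne_of_gt hl.1)]
        linarith
      exact (mul_le_mul_iff_right₀ hl.1).1 h5
    have hfin := le_of_tendsto hlim hev
    rw [hA]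
    exact EReal.coe_le_coe_iff.2 (by linarith)
  -- membership of u_c in the subdifferential
  have hmem : ∀ c : ℝ, c ∈ I k → ∀ y : XX,
      f xbar + ((⟪(c + h' xbar k) • e k, y - xbar⟫ : ℝ) : EReal) ≤ f y := by
    intro c hc y
    set uc : XX := (c + h' xbar k) • e k with huc
    set d : XX := y - xbar with hd
    have hdj : ∀ j, d j = y j - xbar j := by
      intro j; rw [hd]; simp [lp.coeFn_sub]
    have hucj : ∀ j, uc j = (if j = k then c + h' xbar k else 0) := by
      intro j
      have h1 : uc j = (c + h' xbar k) * e k j := by rw [huc]; simp [lp.coeFn_smul]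
      rw [h1, he]
      by_cases hj : j = k <;> simp [hj]
    set w : ℕ → ℝ := fun j => (uc j - h' xbar j) * d j with hw
    have hWsum : HasSum w ⟪uc - h' xbar, d⟫ := by
      have h1 := lp.hasSum_inner (𝕜 := ℝ) (uc - h' xbar) d
      have h2 : (fun j => (⟪(uc - h' xbar) j, d j⟫ : ℝ)) = w := by
        funext j
        rw [hw]
        simp [lp.coeFn_sub, RCLike.inner_apply', Pi.sub_apply]; ring
      rw [h2] at h1
      exact h1
    have hpt : ∀ j, ((ta j + w j : ℝ) : EReal) ≤ φ j (y j) := by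
      intro j
      by_cases hj : j = k
      · subst hj
        have hyk : y j = d j := by rw [hdj, hk0]; ring
        have hwj : w j = c * d j := by
          rw [hw]; simp only [hucj, eq_self_iff_true, if_true]; ring
        rw [htak, hwj, zero_add, ← hyk]
        calc ((c * y j : ℝ) : EReal) = 0 + ((c * y j : ℝ) : EReal) := (zero_add _).symm
          _ ≤ ψ j (y j) + σ' j (y j) := add_le_add (hψnn j _) (hσle j (y j) c hc)
          _ = φ j (y j) := rfl
      · have hwj : w j = -(h' xbar j) * d j := by
          rw [hw]; simp only [hucj, if_neg hj]; ring
        have h1 := L4 j (d j)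
        rw [show xbar j + d j = y j by rw [hdj]; ring] at h1
        rw [hwj, show ta j + -(h' xbar j) * d j = ta j - h' xbar j * d j by ring]
        exact h1
    have hkey := key_sum_le ta w G ⟪uc - h' xbar, d⟫ (fun j => φ j (y j)) (fun j => hφnn j _)
      hHa hWsum hpt
    have hinner2 : ⟪uc - h' xbar, d⟫ + ⟪h' xbar, d⟫ = ⟪uc, d⟫ := by
      rw [inner_sub_left]; ring
    have hgy : ((G + ⟪uc - h' xbar, d⟫ : ℝ) : EReal) ≤ g y := by rw [hgφ y]; exact hkey
    have hhy : h xbar + ⟪h' xbar, d⟫ ≤ h y := hconvh y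
    rw [hf y, hfxbar]
    calc ((G + h xbar : ℝ) : EReal) + ((⟪uc, d⟫ : ℝ) : EReal)
        = ((G + ⟪uc - h' xbar, d⟫ : ℝ) : EReal) + ((h xbar + ⟪h' xbar, d⟫ : ℝ) : EReal) := by
          rw [← EReal.coe_add, ← EReal.coe_add]
          norm_cast
          linear_combination (-1 : ℝ) * hinner2
      _ ≤ g y + ((h y : ℝ) : EReal) := add_le_add hgy (by exact_mod_cast hhy)
  -- sign claim
  set z : ℝ := -(h' xbar k) with hzdef
  have hlubglb : IsLUB (I k) z ∨ IsGLB (I k) z := frontier_lub _ (hIcl k) (hIconn k) z hk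
  have hzI : z ∈ I k := (hIcl k).frontier_eq ▸ hk |>.1
  obtain ⟨Ftk, ε, hε, hFψk, hFdk⟩ := hψdiff k
  have hFk0 : Ftk 0 = 0 := by
    have h1 := hFψk 0 (by simpa using hε)
    rw [hψ0 k] at h1
    exact_mod_cast h1.symm
  have bound : ∀ u : XX, (∀ y, f xbar + ((⟪u, y - xbar⟫ : ℝ) : EReal) ≤ f y) →
      ∀ t : ℝ, |t| < ε → σ' k t = ((z * t : ℝ) : EReal) →
      t * u k ≤ Ftk t + z * t + (h (xbar + t • e k) - h xbar) := by
    intro u hu t htε hσt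
    set y := xbar + t • e k with hy
    have h1 := hu y
    rw [show y - xbar = t • e k by rw [hy]; exact add_sub_cancel_left xbar _] at h1
    rw [hinner u k t] at h1
    have hyk : y k = t := by rw [hy, hco]; simp [hk0]
    have hyj : ∀ i, i ≠ k → y i = xbar i := by
      intro i hik; rw [hy, hco]; simp [hik]
    have hgy : g y ≤ ((G - ta k : ℝ) : EReal) + φ k (y k) := by
      rw [hgφ y]
      have h4 := tsum_update_le ta G htann hHa (fun i => φ i (y i)) (fun i => hφnn i _) k
        (fun i hik => by show φ i (y i) = _; rw [hyj i hik, hta i])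
      exact h4
    have hφt : φ k (y k) = ((Ftk t + z * t : ℝ) : EReal) := by
      rw [hyk]
      show ψ k t + σ' k t = _
      rw [hFψk t htε, hσt, ← EReal.coe_add]
    rw [hφt] at hgy
    rw [hfxbar, hf y] at h1
    have h2 : ((G + h xbar + t * u k : ℝ) : EReal)
        ≤ ((G - ta k + (Ftk t + z * t) + h y : ℝ) : EReal) := by
      calc ((G + h xbar + t * u k : ℝ) : EReal)
          = ((G + h xbar : ℝ) : EReal) + ((t * u k : ℝ) : EReal) := by rw [← EReal.coe_add]
        _ ≤ g y + ((h y : ℝ) : EReal) := h1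
        _ ≤ ((G - ta k + (Ftk t + z * t) : ℝ) : EReal) + ((h y : ℝ) : EReal) := by
            refine add_le_add ?_ le_rfl
            rw [EReal.coe_add]
            exact hgy
        _ = _ := by rw [← EReal.coe_add]
    have h3 := EReal.coe_le_coe_iff.1 h2
    rw [htak] at h3
    linarith
  have hq2 : Tendsto (fun t : ℝ => (h (xbar + t • e k) - h xbar) / t) (𝓝[({0}ᶜ : Set ℝ)] 0)
      (𝓝 (h' xbar k)) := by
    have hq := diffquot_tendsto h (h' xbar) xbar (hhgrad xbar) (e k) ({0}ᶜ : Set ℝ) subset_rfl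
    have hip : ⟪h' xbar, e k⟫ = h' xbar k := by
      have h5 := hinner (h' xbar) k 1
      rw [one_smul] at h5
      simpa using h5
    rw [hip] at hq
    exact hq
  have hFq : Tendsto (fun t : ℝ => Ftk t / t) (𝓝[({0}ᶜ : Set ℝ)] 0) (𝓝 0) :=
    slope_tendsto Ftk 0 hFdk hFk0 ({0}ᶜ : Set ℝ) subset_rfl
  have hz0 : (0:ℝ) + z + h' xbar k = 0 := by rw [hzdef]; ring
  have hsign : (∀ u : XX, (∀ y, f xbar + ((⟪u, y - xbar⟫ : ℝ) : EReal) ≤ f y) → u k ≤ 0)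
      ∨ (∀ u : XX, (∀ y, f xbar + ((⟪u, y - xbar⟫ : ℝ) : EReal) ≤ f y) → 0 ≤ u k) := by
    rcases hlubglb with hlub | hglb
    · left
      intro u hu
      have hσt : ∀ t : ℝ, 0 ≤ t → σ' k t = ((z * t : ℝ) : EReal) := by
        intro t ht
        refine le_antisymm (iSup₂_le fun s hs => ?_) (hσle k t z hzI)
        exact EReal.coe_le_coe_iff.2 (mul_le_mul_of_nonneg_right (hlub.1 hs) ht)
      have hev : ∀ᶠ t in 𝓝[>] (0:ℝ),
          u k ≤ Ftk t / t + z + (h (xbar + t • e k) - h xbar) / t := by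
        filter_upwards [Ioo_mem_nhdsGT_of_mem (Set.left_mem_Ico.2 hε)] with t ht
        have hb := bound u hu t (by rw [abs_of_pos ht.1]; exact ht.2) (hσt t ht.1.le)
        have ht0 : t ≠ 0 := ne_of_gt ht.1
        have heq : t * (Ftk t / t + z + (h (xbar + t • e k) - h xbar) / t)
            = Ftk t + z * t + (h (xbar + t • e k) - h xbar) := by
          field_simp
        refine (mul_le_mul_iff_right₀ ht.1).1 ?_
        rw [heq]
        exact hb
      have hlim : Tendsto (fun t : ℝ => Ftk t / t + z + (h (xbar + t • e k) - h xbar) / t)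
          (𝓝[>] (0:ℝ)) (𝓝 ((0:ℝ) + z + h' xbar k)) := by
        have hmono : 𝓝[>] (0:ℝ) ≤ 𝓝[({0}ᶜ : Set ℝ)] 0 :=
          nhdsWithin_mono _ (fun l hl => by simpa using ne_of_gt hl)
        exact ((hFq.mono_left hmono).add tendsto_const_nhds).add (hq2.mono_left hmono)
      rw [hz0] at hlim
      exact ge_of_tendsto hlim hev
    · right
      intro u hu
      have hσt : ∀ t : ℝ, t ≤ 0 → σ' k t = ((z * t : ℝ) : EReal) := by
        intro t ht
        refine le_antisymm (iSup₂_le fun s hs => ?_) (hσle k t z hzI)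
        refine EReal.coe_le_coe_iff.2 ?_
        nlinarith [hglb.1 hs]
      have hev : ∀ᶠ t in 𝓝[<] (0:ℝ),
          Ftk t / t + z + (h (xbar + t • e k) - h xbar) / t ≤ u k := by
        filter_upwards [Ioo_mem_nhdsLT_of_mem
          (show (0:ℝ) ∈ Set.Ioc (-ε) 0 from ⟨by linarith, le_refl 0⟩)] with t ht
        have hb := bound u hu t (by rw [abs_of_neg ht.2]; linarith [ht.1]) (hσt t ht.2.le)
        have ht0 : t ≠ 0 := ne_of_lt ht.2
        have heq : (Ftk t / t + z + (h (xbar + t • e k) - h xbar) / t)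
            = (Ftk t + z * t + (h (xbar + t • e k) - h xbar)) / t := by
          field_simp
        rw [heq, div_le_iff_of_neg ht.2]
        nlinarith [hb]
      have hlim : Tendsto (fun t : ℝ => Ftk t / t + z + (h (xbar + t • e k) - h xbar) / t)
          (𝓝[<] (0:ℝ)) (𝓝 ((0:ℝ) + z + h' xbar k)) := by
        have hmono : 𝓝[<] (0:ℝ) ≤ 𝓝[({0}ᶜ : Set ℝ)] 0 :=
          nhdsWithin_mono _ (fun l hl => by simpa using ne_of_lt hl)
        exact ((hFq.mono_left hmono).add tendsto_const_nhds).add (hq2.mono_left hmono)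
      rw [hz0] at hlim
      exact le_of_tendsto hlim hev
  -- subspace argument
  obtain ⟨S, hS⟩ := hqri.2
  have hDS : ∀ u : XX, (∀ y, f xbar + ((⟪u, y - xbar⟫ : ℝ) : EReal) ≤ f y) →
      u ∈ (S : Set XX) := by
    intro u hu
    rw [← hS]
    exact subset_closure ⟨1, zero_le_one, u, hu, (one_smul _ _).symm⟩
  have hzero : ∀ u : XX, (∀ y, f xbar + ((⟪u, y - xbar⟫ : ℝ) : EReal) ≤ f y) → u k = 0 := by
    intro u hu
    have huS := hDS u hu
    have hnegS : -u ∈ (S : Set XX) := S.neg_mem huS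
    have hnu : (-u) k = -(u k) := by simp [lp.coeFn_neg]
    rcases hsign with hle | hge
    · have hclosed : IsClosed {x : XX | x k ≤ 0} := by
        have heq : {x : XX | x k ≤ 0} = (fun x : XX => x k) ⁻¹' Set.Iic 0 := rfl
        rw [heq]
        exact isClosed_Iic.preimage (eval_cont k)
      have hsub : (S : Set XX) ⊆ {x : XX | x k ≤ 0} := by
        rw [← hS]
        refine closure_minimal ?_ hclosed
        rintro zz ⟨t, ht, u', hu', rfl⟩
        show (t • u') k ≤ 0
        have h1 : (t • u') k = t * u' k := by simp [lp.coeFn_smul]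
        rw [h1]
        exact mul_nonpos_iff.2 (Or.inl ⟨ht, hle u' hu'⟩)
      have h1 : u k ≤ 0 := hsub huS
      have h2 : (-u) k ≤ 0 := hsub hnegS
      rw [hnu] at h2
      linarith
    · have hclosed : IsClosed {x : XX | 0 ≤ x k} := by
        have heq : {x : XX | 0 ≤ x k} = (fun x : XX => x k) ⁻¹' Set.Ici 0 := rfl
        rw [heq]
        exact isClosed_Ici.preimage (eval_cont k)
      have hsub : (S : Set XX) ⊆ {x : XX | 0 ≤ x k} := by
        rw [← hS]
        refine closure_minimal ?_ hclosed
        rintro zz ⟨t, ht, u', hu', rfl⟩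
        show 0 ≤ (t • u') k
        have h1 : (t • u') k = t * u' k := by simp [lp.coeFn_smul]
        rw [h1]
        exact mul_nonneg ht (hge u' hu')
      have h1 : 0 ≤ u k := hsub huS
      have h2 : 0 ≤ (-u) k := hsub hnegS
      rw [hnu] at h2
      linarith
  -- final contradiction
  have hωI : (ω : ℝ) ∈ I k := hIsub k ⟨by linarith, le_refl ω⟩
  have hmωI : -ω ∈ I k := hIsub k ⟨le_refl _, by linarith⟩
  have hcoord : ∀ c : ℝ, ((c + h' xbar k) • e k) k = c + h' xbar k := by
    intro c
    have : ((c + h' xbar k) • e k) k = (c + h' xbar k) * e k k := by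
      simp [lp.coeFn_smul]
    rw [this, he]; simp
  have h1 := hzero _ (hmem ω hωI)
  have h2 := hzero _ (hmem (-ω) hmωI)
  rw [hcoord] at h1 h2
  linarith
end
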